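/- Let E, A ∈ ℂ^{n×n}, B ∈ ℂ^{n×m}, and suppose s₀E − A is invertible. Then the pair (E(s₀E − A)^{-1}, B) satisfies the PBH rank condition rank([sI − E(s₀E − A)^{-1}, B]) = n for all s ∈ ℂ if and only if rank([sE − A, B]) = n for all s ∈ ℂ and rank([E, B]) = n. -/

import Mathlib

open Matrix

private lemma rank_fromColumns_mul_unit {n m : ℕ} (X M : Matrix (Fin n) (Fin n) ℂ)
    (B : Matrix (Fin n) (Fin m) ℂ) (hM : IsUnit M) :
    (fromCols (X * M) B).rank = (fromCols X B).rank := by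
  have h : fromCols (X * M) B = fromCols X B * fromBlocks M 0 0 (1 : Matrix (Fin m) (Fin m) ℂ) := by
    rw [fromCols_mul_fromBlocks]; simp
  rw [h, rank_mul_eq_left_of_isUnit_det]
  rw [det_fromBlocks_zero₂₁, det_one, mul_one]
  exact (isUnit_iff_isUnit_det M).mp hM

private lemma rank_fromColumns_smul {n m : ℕ} (c : ℂ) (hc : c ≠ 0) (X : Matrix (Fin n) (Fin n) ℂ)
    (B : Matrix (Fin n) (Fin m) ℂ) :
    (fromCols (c • X) B).rank = (fromCols X B).rank := by
  have h : c • X = X * (c • (1 : Matrix (Fin n) (Fin n) ℂ)) := by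
    rw [Matrix.mul_smul, mul_one]
  rw [h]
  apply rank_fromColumns_mul_unit
  apply (isUnit_iff_isUnit_det _).mpr
  rw [det_smul, det_one, mul_one]
  exact isUnit_iff_ne_zero.mpr (pow_ne_zero _ hc)

private lemma rank_fromColumns_unit {n m : ℕ} (X : Matrix (Fin n) (Fin n) ℂ)
    (B : Matrix (Fin n) (Fin m) ℂ) (hX : IsUnit X) :
    (fromCols X B).rank = n := by
  refine le_antisymm ?_ ?_
  · simpa using (fromCols X B).rank_le_card_height
  · have h : X = fromCols X B * fromRows (1 : Matrix (Fin n) (Fin n) ℂ) (0 : Matrix (Fin m) (Fin n) ℂ) := by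
      rw [fromCols_mul_fromRows]; simp
    have hle := rank_mul_le_left (fromCols X B) (fromRows (1 : Matrix (Fin n) (Fin n) ℂ) (0 : Matrix (Fin m) (Fin n) ℂ))
    rw [← h] at hle
    calc (n : ℕ) = X.rank := by simpa using (rank_of_isUnit X hX).symm
      _ ≤ (fromCols X B).rank := hle

theorem stmt_3 {n m : ℕ} (E A : Matrix (Fin n) (Fin n) ℂ) (B : Matrix (Fin n) (Fin m) ℂ)
    (s₀ : ℂ) (hreg : IsUnit (s₀ • E - A)) :
    (∀ s : ℂ, (Matrix.fromCols (s • (1 : Matrix (Fin n) (Fin n) ℂ) - E * (s₀ • E - A)⁻¹) B).rank = n)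
      ↔ ((∀ s : ℂ, (Matrix.fromCols (s • E - A) B).rank = n)
          ∧ (Matrix.fromCols E B).rank = n) := by
  set P := s₀ • E - A with hP
  have hdet : IsUnit P.det := (isUnit_iff_isUnit_det P).mp hreg
  have hPM : P * P⁻¹ = 1 := mul_nonsing_inv P hdet
  have hMunit : IsUnit P⁻¹ := by
    apply (isUnit_iff_isUnit_det _).mpr
    rw [det_nonsing_inv]
    simpa using hdet
  -- key rewriting : s•1 - E*P⁻¹ = (s•P - E) * P⁻¹
  have hkey : ∀ s : ℂ, s • (1 : Matrix (Fin n) (Fin n) ℂ) - E * P⁻¹ = (s • P - E) * P⁻¹ := by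
    intro s
    rw [Matrix.sub_mul, Matrix.smul_mul, hPM]
  have hrank : ∀ s : ℂ,
      (fromCols (s • (1 : Matrix (Fin n) (Fin n) ℂ) - E * P⁻¹) B).rank
        = (fromCols (s • P - E) B).rank := by
    intro s
    rw [hkey s]
    exact rank_fromColumns_mul_unit _ _ _ hMunit
  constructor
  · intro h
    constructor
    · intro t
      by_cases ht : t = s₀
      · subst ht
        exact rank_fromColumns_unit _ _ hreg
      · have hs0 : s₀ - t ≠ 0 := sub_ne_zero.mpr (Ne.symm ht)
        have hsne : (s₀ - t)⁻¹ ≠ 0 := inv_ne_zero hs0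
        set s : ℂ := (s₀ - t)⁻¹ with hs
        have heq : s • P - E = s • (t • E - A) := by
          rw [hP, hs]
          ext i j
          simp only [Matrix.sub_apply, Matrix.smul_apply, smul_eq_mul, Matrix.one_apply]
          field_simp
          ring
        have := h s
        rw [hrank s, heq, rank_fromColumns_smul s hsne] at this
        exact this
    · have := h 0
      rw [hrank 0, zero_smul, zero_sub] at this
      have h2 : -E = (-1 : ℂ) • E := by simp
      rw [h2, rank_fromColumns_smul (-1) (by norm_num)] at this
      exact this
  · rintro ⟨h1, h2⟩ s
    rw [hrank s]
    by_cases hs : s = 0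
    · subst hs
      rw [zero_smul, zero_sub, show -E = (-1 : ℂ) • E by simp,
        rank_fromColumns_smul (-1) (by norm_num)]
      exact h2
    · set t : ℂ := s₀ - s⁻¹ with ht
      have heq : s • P - E = s • (t • E - A) := by
        rw [hP, ht]
        ext i j
        simp only [Matrix.sub_apply, Matrix.smul_apply, smul_eq_mul, Matrix.one_apply]
        field_simp
        ring
      rw [heq, rank_fromColumns_smul s hs]
      exact h1 t
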